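/- If Φ is an n×N complex matrix with N > n ≥ 1 all of whose columns have unit ℓ₂-norm, then MIP(Φ) ≥ √((N−n)/((N−1)n)). -/

import Mathlib

open scoped BigOperators

noncomputable def welch (n N : ℕ) : ℝ :=
  Real.sqrt (((N : ℝ) - n) / (((N : ℝ) - 1) * n))

/-- Normalised absolute inner product of columns `i` and `j` of `Φ`. -/
noncomputable def colCoh {m ι : Type*} [Fintype m] (Φ : Matrix m ι ℂ) (i j : ι) : ℝ :=
  ‖∑ r, (starRingEnd ℂ) (Φ r i) * Φ r j‖ /
    (Real.sqrt (∑ r, ‖Φ r i‖ ^ 2) * Real.sqrt (∑ r, ‖Φ r j‖ ^ 2))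

/-- `(ℓ₁,t)`-recoverability: every `t`-sparse `x` is the unique `ℓ₁`-minimizer among
solutions `z` of `Φ z = Φ x`. -/
def Recoverable {m ι : Type*} [Fintype m] [Fintype ι] [DecidableEq ι]
    (Φ : Matrix m ι ℂ) (t : ℕ) : Prop :=
  ∀ x : ι → ℂ, (Finset.univ.filter (fun i => x i ≠ 0)).card ≤ t →
    ∀ z : ι → ℂ, Φ.mulVec z = Φ.mulVec x → z ≠ x →
      ∑ i, ‖x i‖ < ∑ i, ‖z i‖
open Matrix in
lemma trace_sq_of_hermitian {m : Type*} [Fintype m] (M : Matrix m m ℂ)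
    (h : M.IsHermitian) :
    (M * M).trace = ((∑ i, ∑ j, ‖M i j‖ ^ 2 : ℝ) : ℂ) := by
  rw [Matrix.trace]
  push_cast
  refine Finset.sum_congr rfl fun i _ => ?_
  rw [Matrix.diag_apply, Matrix.mul_apply]
  refine Finset.sum_congr rfl fun j _ => ?_
  rw [← h.apply j i, RCLike.star_def, RCLike.mul_conj]
  norm_cast

open Matrix

/-- Welch bound: an `n×N` matrix with unit-norm columns and `N > n ≥ 1` has
`MIP(Φ) ≥ √((N−n)/((N−1)n))`, i.e. some pair of distinct columns has coherence at
least the Welch bound. -/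
theorem stmt_1 {n N : ℕ} (hn : 1 ≤ n) (hnN : n < N) (Φ : Matrix (Fin n) (Fin N) ℂ)
    (hunit : ∀ j : Fin N, ∑ i, ‖Φ i j‖ ^ 2 = 1) :
    ∃ i j : Fin N, i ≠ j ∧ welch n N ≤ colCoh Φ i j := by
  by_contra hcon
  push_neg at hcon
  have hN2 : 2 ≤ N := Nat.lt_of_le_of_lt hn hnN
  have hnR : (0:ℝ) < n := by exact_mod_cast hn
  have hNR : (1:ℝ) < N := by exact_mod_cast Nat.lt_of_lt_of_le one_lt_two hN2
  have hnNR : (n:ℝ) < N := by exact_mod_cast hnN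
  set Gm : Matrix (Fin N) (Fin N) ℂ := Φᴴ * Φ with hGmdef
  set Hm : Matrix (Fin n) (Fin n) ℂ := Φ * Φᴴ with hHmdef
  have hGapp : ∀ i j, Gm i j = ∑ r, (starRingEnd ℂ) (Φ r i) * Φ r j := by
    intro i j
    simp [hGmdef, Matrix.mul_apply, Matrix.conjTranspose_apply]
  -- diagonal of Gm is 1
  have hGdiag : ∀ i, Gm i i = 1 := by
    intro i
    rw [hGapp i i]
    have h1 : ∀ r : Fin n, (starRingEnd ℂ) (Φ r i) * Φ r i = ((‖Φ r i‖ ^ 2 : ℝ) : ℂ) := by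
      intro r; rw [RCLike.conj_mul]; norm_num
    rw [Finset.sum_congr rfl fun r _ => h1 r, ← Complex.ofReal_sum, hunit i, Complex.ofReal_one]
  -- coherence is just the norm of Gm entries
  have hcc : ∀ i j, colCoh Φ i j = ‖Gm i j‖ := by
    intro i j
    rw [colCoh, hunit, hunit, Real.sqrt_one, one_mul, div_one, ← hGapp]
  -- traces
  have htrG : Gm.trace = (N : ℂ) := by
    rw [Matrix.trace]
    simp [Matrix.diag_apply, hGdiag]
  have htrH : Hm.trace = (N : ℂ) := by
    rw [hHmdef, ← Matrix.trace_mul_comm, ← hGmdef, htrG]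
  -- real diagonal of Hm
  set e : Fin n → ℝ := fun k => ∑ j, ‖Φ k j‖ ^ 2 with hedef
  have he0 : ∀ k, 0 ≤ e k := fun k => Finset.sum_nonneg fun j _ => by positivity
  have hHdiag : ∀ k, Hm k k = ((e k : ℝ) : ℂ) := by
    intro k
    rw [hHmdef]
    simp only [Matrix.mul_apply, Matrix.conjTranspose_apply]
    have h1 : ∀ j : Fin N, Φ k j * star (Φ k j) = ((‖Φ k j‖ ^ 2 : ℝ) : ℂ) := by
      intro j; rw [RCLike.star_def, RCLike.mul_conj]; norm_num
    rw [Finset.sum_congr rfl fun j _ => h1 j, ← Complex.ofReal_sum]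
  have hesum : ∑ k, e k = (N : ℝ) := by
    have : ((∑ k, e k : ℝ) : ℂ) = ((N : ℝ) : ℂ) := by
      rw [Complex.ofReal_sum]
      rw [← Finset.sum_congr rfl fun k _ => hHdiag k]
      simpa [Matrix.trace] using htrH
    exact_mod_cast this
  -- Frobenius norms
  set F : ℝ := ∑ i, ∑ j, ‖Gm i j‖ ^ 2 with hFdef
  set FH : ℝ := ∑ k, ∑ l, ‖Hm k l‖ ^ 2 with hFHdef
  have hGherm : Gm.IsHermitian := Matrix.isHermitian_conjTranspose_mul_self Φ
  have hHherm : Hm.IsHermitian := Matrix.isHermitian_mul_conjTranspose_self Φ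
  have hFeq : F = FH := by
    have h1 : (Gm * Gm).trace = (Hm * Hm).trace := by
      rw [hGmdef, hHmdef, Matrix.mul_assoc, Matrix.trace_mul_comm]
      simp only [Matrix.mul_assoc]
    have h2 := trace_sq_of_hermitian Gm hGherm
    have h3 := trace_sq_of_hermitian Hm hHherm
    rw [h2, h3] at h1
    exact_mod_cast h1
  -- Cauchy–Schwarz on the diagonal of Hm
  have hCS : (N : ℝ) ^ 2 ≤ n * FH := by
    have h1 : (∑ k, e k) ^ 2 ≤ ((Finset.univ : Finset (Fin n)).card : ℝ) * ∑ k, e k ^ 2 :=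
      sq_sum_le_card_mul_sum_sq
    rw [hesum, Finset.card_univ, Fintype.card_fin] at h1
    have h2 : ∑ k, e k ^ 2 ≤ FH := by
      refine Finset.sum_le_sum fun k _ => ?_
      have : e k ^ 2 = ‖Hm k k‖ ^ 2 := by
        rw [hHdiag k, Complex.norm_real, Real.norm_eq_abs, abs_of_nonneg (he0 k)]
      rw [this]
      exact Finset.single_le_sum (f := fun l => ‖Hm k l‖ ^ 2)
        (fun l _ => by positivity) (Finset.mem_univ k)
    calc (N:ℝ)^2 ≤ n * ∑ k, e k ^ 2 := h1
      _ ≤ n * FH := by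
        have := h2
        nlinarith
  -- split F into diagonal and off-diagonal parts
  have hdiagF : ∑ i : Fin N, ‖Gm i i‖ ^ 2 = (N : ℝ) := by
    simp [hGdiag]
  have hsplit : F = (N : ℝ) + ∑ p ∈ (Finset.univ : Finset (Fin N)).offDiag, ‖Gm p.1 p.2‖ ^ 2 := by
    rw [hFdef, ← Finset.sum_product', ← Finset.diag_union_offDiag,
      Finset.sum_union (Finset.disjoint_diag_offDiag _), Finset.sum_diag, hdiagF]
  -- numeric bound on each off-diagonal term
  set c : ℝ := ((N : ℝ) - n) / (((N : ℝ) - 1) * n) with hcdef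
  have hc0 : 0 ≤ c := by
    apply div_nonneg <;> nlinarith
  have hterm : ∀ p ∈ (Finset.univ : Finset (Fin N)).offDiag, ‖Gm p.1 p.2‖ ^ 2 < c := by
    intro p hp
    obtain ⟨-, -, hne⟩ := Finset.mem_offDiag.mp hp
    have h1 : ‖Gm p.1 p.2‖ < welch n N := by
      rw [← hcc]; exact hcon p.1 p.2 hne
    have h2 : welch n N ^ 2 = c := Real.sq_sqrt hc0
    calc ‖Gm p.1 p.2‖ ^ 2 < welch n N ^ 2 := by
          apply pow_lt_pow_left₀ h1 (norm_nonneg _) (by norm_num)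
      _ = c := h2
  have hne : ((Finset.univ : Finset (Fin N)).offDiag).Nonempty := by
    refine ⟨((⟨0, by omega⟩ : Fin N), (⟨1, by omega⟩ : Fin N)),
      Finset.mem_offDiag.mpr ⟨Finset.mem_univ _, Finset.mem_univ _, ?_⟩⟩
    intro h
    simpa using congrArg Fin.val h
  have hcard : (((Finset.univ : Finset (Fin N)).offDiag).card : ℝ) = (N : ℝ) * N - N := by
    rw [Finset.offDiag_card, Finset.card_univ, Fintype.card_fin]
    have hle : N ≤ N * N := Nat.le_mul_of_pos_left N (by omega)
    push_cast [Nat.cast_sub hle]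
    ring
  have hoff : ∑ p ∈ (Finset.univ : Finset (Fin N)).offDiag, ‖Gm p.1 p.2‖ ^ 2
      < ((N : ℝ) * N - N) * c := by
    calc ∑ p ∈ (Finset.univ : Finset (Fin N)).offDiag, ‖Gm p.1 p.2‖ ^ 2
        < ∑ _p ∈ (Finset.univ : Finset (Fin N)).offDiag, c :=
          Finset.sum_lt_sum_of_nonempty hne hterm
      _ = (((Finset.univ : Finset (Fin N)).offDiag).card : ℝ) * c := by
          rw [Finset.sum_const, nsmul_eq_mul]
      _ = ((N : ℝ) * N - N) * c := by rw [hcard]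
  -- final contradiction
  have hkey : ((N : ℝ) * N - N) * c = (N : ℝ) ^ 2 / n - N := by
    rw [hcdef]
    have h1 : ((N : ℝ) - 1) ≠ 0 := by nlinarith
    have h2 : (n : ℝ) ≠ 0 := ne_of_gt hnR
    field_simp
  have hF : (N : ℝ) ^ 2 / n ≤ F := by
    rw [hFeq, div_le_iff₀ hnR]
    linarith [hCS]
  rw [hsplit] at hF
  rw [hkey] at hoff
  linarith
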